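/- Let ρ ∈ [1/2, 1) be such that m = 1/(1−ρ) is a positive integer, let L > 0, let N ≥ 2 be an integer, and let T = N·m. Take 𝒳 = [−1,1] ⊆ ℝ and the OCO with ρ-discounted infinite memory instance with the 2-norm, so h_t = (x_t, ρ x_{t−1}, ρ² x_{t−2}, …, ρ^{t−1} x_1, 0, …). For each ε ∈ {−1,+1}^N define losses: f_t^ε = 0 for t ≤ m; and for t > m lying in block n (i.e., (n−1)m < t ≤ nm), f_t^ε(h_t) = ε_n · L · m^{−1/2} · Σ_{k=0}^{m−1} ρ^{k + t − (n−1)m − 1} · x_{(n−1)m+1−k}. (Each f_t^ε is linear, hence convex, and is L-Lipschitz with respect to the norm on ℋ.) Then there is an absolute constant c > 0 such that for every adaptive algorithm — every family of functions x_t : {−1,+1}^N → [−1,1] (t = 1, …, T) such that x_t(ε) depends only on ε_1, …, ε_{⌈(t−1)/m⌉} — the expected policy regret satisfies E_{ε uniform on {−1,+1}^N}[ Σ_{t=1}^{T} f_t^ε(h_t(ε)) − min_{x ∈ [−1,1]} Σ_{t=1}^{T} f̄_t^ε(x) ] ≥ c · L · √T · (1−ρ)^{−1}. -/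

import Mathlib

/-! ### Auxiliary machinery: Rademacher signs over `Fin N → Bool` -/

noncomputable def rr {N : ℕ} (ε : Fin N → Bool) (b : Fin N) : ℝ := if ε b then 1 else -1

lemma rr_abs {N : ℕ} (ε : Fin N → Bool) (b : Fin N) : |rr ε b| = 1 := by
  unfold rr; split <;> norm_num

lemma rr_sq {N : ℕ} (ε : Fin N → Bool) (b : Fin N) : rr ε b * rr ε b = 1 := by
  unfold rr; split <;> norm_num

lemma rr_update_self {N : ℕ} (ε : Fin N → Bool) (i : Fin N) :
    rr (Function.update ε i (!(ε i))) i = - rr ε i := by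
  unfold rr; rcases h : ε i <;> simp [h]

lemma rr_update_ne {N : ℕ} (ε : Fin N → Bool) (i j : Fin N) (v : Bool) (h : j ≠ i) :
    rr (Function.update ε i v) j = rr ε j := by
  unfold rr; rw [Function.update_of_ne h]

noncomputable def flipE {N : ℕ} (i : Fin N) : (Fin N → Bool) ≃ (Fin N → Bool) where
  toFun ε := Function.update ε i (!(ε i))
  invFun ε := Function.update ε i (!(ε i))
  left_inv ε := by
    funext j
    by_cases h : j = i
    · subst h; simp
    · simp [Function.update_of_ne h]
  right_inv ε := by
    funext j
    by_cases h : j = i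
    · subst h; simp
    · simp [Function.update_of_ne h]

lemma flip_sum {N : ℕ} (i : Fin N) (F : (Fin N → Bool) → ℝ)
    (h : ∀ ε, F (Function.update ε i (!(ε i))) = - F ε) :
    ∑ ε : Fin N → Bool, F ε = 0 := by
  have h1 : ∑ ε : Fin N → Bool, F ε = ∑ ε : Fin N → Bool, F (flipE i ε) :=
    (Equiv.sum_comp (flipE i) F).symm
  have h2 : ∑ ε : Fin N → Bool, F (flipE i ε) = - ∑ ε : Fin N → Bool, F ε := by
    rw [← Finset.sum_neg_distrib]
    exact Finset.sum_congr rfl fun ε _ => h ε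
  linarith [h1, h2]

lemma sum_rr_one {N : ℕ} : ∑ _ε : Fin N → Bool, (1:ℝ) = 2^N := by
  rw [Finset.sum_const, Finset.card_univ, Fintype.card_fun]
  simp

lemma sum_rr_mul {N : ℕ} (i j : Fin N) (h : i ≠ j) :
    ∑ ε : Fin N → Bool, rr ε i * rr ε j = 0 := by
  apply flip_sum i
  intro ε
  rw [rr_update_self, rr_update_ne _ _ _ _ (Ne.symm h)]
  ring

lemma sum_rr4 {N : ℕ} (a b c d : Fin N) (h1 : a ≠ b) (h2 : a ≠ c) (h3 : a ≠ d) :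
    ∑ ε : Fin N → Bool, rr ε a * rr ε b * rr ε c * rr ε d = 0 := by
  apply flip_sum a
  intro ε
  rw [rr_update_self, rr_update_ne _ _ _ _ (Ne.symm h1), rr_update_ne _ _ _ _ (Ne.symm h2),
    rr_update_ne _ _ _ _ (Ne.symm h3)]
  ring

lemma sum_S_sq {N : ℕ} (B : Finset (Fin N)) :
    ∑ ε : Fin N → Bool, (∑ b ∈ B, rr ε b)^2 = 2^N * B.card := by
  have expand : ∀ ε : Fin N → Bool, (∑ b ∈ B, rr ε b)^2 = ∑ a ∈ B, ∑ b ∈ B, rr ε a * rr ε b := by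
    intro ε; rw [sq, Finset.sum_mul_sum]
  calc ∑ ε : Fin N → Bool, (∑ b ∈ B, rr ε b)^2
      = ∑ a ∈ B, ∑ b ∈ B, ∑ ε : Fin N → Bool, rr ε a * rr ε b := by
        simp_rw [expand]
        rw [Finset.sum_comm]
        congr 1; ext a
        rw [Finset.sum_comm]
    _ = ∑ a ∈ B, ∑ b ∈ B, if a = b then (2:ℝ)^N else 0 := by
        apply Finset.sum_congr rfl; intro a _
        apply Finset.sum_congr rfl; intro b _
        by_cases h : a = b
        · subst h; simp only [if_pos rfl]
          calc ∑ ε : Fin N → Bool, rr ε a * rr ε a = ∑ _ε : Fin N → Bool, (1:ℝ) := by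
                apply Finset.sum_congr rfl; intro ε _; exact rr_sq ε a
            _ = 2^N := sum_rr_one
        · rw [if_neg h]; exact sum_rr_mul a b h
    _ = 2^N * B.card := by
        simp_rw [Finset.sum_ite_eq, Finset.sum_ite_mem, Finset.inter_self]
        rw [Finset.sum_const]
        ring

lemma term_bound {N : ℕ} (a b c d : Fin N) :
    ∑ ε : Fin N → Bool, rr ε a * rr ε b * rr ε c * rr ε d ≤
      2^N * ((if a = b ∧ c = d then (1:ℝ) else 0) + (if a = c ∧ b = d then 1 else 0)
        + (if a = d ∧ b = c then 1 else 0)) := by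
  by_cases hpair : (a = b ∧ c = d) ∨ (a = c ∧ b = d) ∨ (a = d ∧ b = c)
  · have hT : ∑ ε : Fin N → Bool, rr ε a * rr ε b * rr ε c * rr ε d ≤ 2^N := by
      calc ∑ ε : Fin N → Bool, rr ε a * rr ε b * rr ε c * rr ε d
          ≤ ∑ _ε : Fin N → Bool, (1:ℝ) := by
            apply Finset.sum_le_sum
            intro ε _
            have : |rr ε a * rr ε b * rr ε c * rr ε d| = 1 := by
              rw [abs_mul, abs_mul, abs_mul, rr_abs, rr_abs, rr_abs, rr_abs]; norm_num
            calc rr ε a * rr ε b * rr ε c * rr ε d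
                ≤ |rr ε a * rr ε b * rr ε c * rr ε d| := le_abs_self _
              _ = 1 := this
        _ = 2^N := sum_rr_one
    have hR : (1:ℝ) ≤ ((if a = b ∧ c = d then (1:ℝ) else 0) + (if a = c ∧ b = d then 1 else 0)
        + (if a = d ∧ b = c then 1 else 0)) := by
      have i1 : (0:ℝ) ≤ (if a = b ∧ c = d then (1:ℝ) else 0) := by positivity
      have i2 : (0:ℝ) ≤ (if a = c ∧ b = d then (1:ℝ) else 0) := by positivity
      have i3 : (0:ℝ) ≤ (if a = d ∧ b = c then (1:ℝ) else 0) := by positivity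
      rcases hpair with h | h | h
      · rw [if_pos h]; linarith
      · rw [if_pos h]; linarith
      · rw [if_pos h]; linarith
    have h2N : (1:ℝ) ≤ 2^N := by
      have := pow_le_pow_left₀ (show (0:ℝ) ≤ 1 by norm_num) (show (1:ℝ) ≤ 2 by norm_num) N
      simpa using this
    nlinarith
  · push_neg at hpair
    obtain ⟨h1, h2, h3⟩ := hpair
    have hz : ∑ ε : Fin N → Bool, rr ε a * rr ε b * rr ε c * rr ε d = 0 := by
      by_cases hab : a = b
      · have hcd : c ≠ d := fun h => h1 hab h
        by_cases hca : c = a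
        · have hda : d ≠ a := fun h => hcd (hca.trans h.symm)
          have hdb : d ≠ b := fun h => hda (h.trans hab.symm)
          calc ∑ ε : Fin N → Bool, rr ε a * rr ε b * rr ε c * rr ε d
              = ∑ ε : Fin N → Bool, rr ε d * rr ε a * rr ε b * rr ε c := by
                apply Finset.sum_congr rfl; intro ε _; ring
            _ = 0 := sum_rr4 d a b c hda hdb (Ne.symm hcd)
        · have hcb : c ≠ b := fun h => hca (h.trans hab.symm)
          calc ∑ ε : Fin N → Bool, rr ε a * rr ε b * rr ε c * rr ε d
              = ∑ ε : Fin N → Bool, rr ε c * rr ε a * rr ε b * rr ε d := by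
                apply Finset.sum_congr rfl; intro ε _; ring
            _ = 0 := sum_rr4 c a b d hca hcb hcd
      · by_cases hac : a = c
        · have hbd : b ≠ d := fun h => h2 hac h
          have hba : b ≠ a := Ne.symm hab
          have hbc : b ≠ c := fun h => hab (hac.trans h.symm)
          calc ∑ ε : Fin N → Bool, rr ε a * rr ε b * rr ε c * rr ε d
              = ∑ ε : Fin N → Bool, rr ε b * rr ε a * rr ε c * rr ε d := by
                apply Finset.sum_congr rfl; intro ε _; ring
            _ = 0 := sum_rr4 b a c d hba hbc hbd
        · by_cases had : a = d
          · have hbc : b ≠ c := fun h => h3 had h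
            have hba : b ≠ a := Ne.symm hab
            have hbd : b ≠ d := fun h => hab (had.trans h.symm)
            calc ∑ ε : Fin N → Bool, rr ε a * rr ε b * rr ε c * rr ε d
                = ∑ ε : Fin N → Bool, rr ε b * rr ε a * rr ε c * rr ε d := by
                  apply Finset.sum_congr rfl; intro ε _; ring
              _ = 0 := sum_rr4 b a c d hba hbc hbd
          · exact sum_rr4 a b c d hab hac had
    rw [hz]
    positivity

lemma count1 {N : ℕ} (B : Finset (Fin N)) :
    ∑ a ∈ B, ∑ b ∈ B, ∑ c ∈ B, ∑ d ∈ B, (if a = b ∧ c = d then (1:ℝ) else 0)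
      = (B.card : ℝ)^2 := by
  have e1 : ∀ a b c : Fin N, c ∈ B → ∑ d ∈ B, (if a = b ∧ c = d then (1:ℝ) else 0)
      = (if a = b then (1:ℝ) else 0) := by
    intro a b c hc
    by_cases h : a = b
    · simp [h, Finset.sum_ite_eq, hc]
    · simp [h]
  calc ∑ a ∈ B, ∑ b ∈ B, ∑ c ∈ B, ∑ d ∈ B, (if a = b ∧ c = d then (1:ℝ) else 0)
      = ∑ a ∈ B, ∑ b ∈ B, ∑ _c ∈ B, (if a = b then (1:ℝ) else 0) := by
        apply Finset.sum_congr rfl; intro a _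
        apply Finset.sum_congr rfl; intro b _
        apply Finset.sum_congr rfl; intro c hc
        exact e1 a b c hc
    _ = ∑ a ∈ B, ∑ b ∈ B, (B.card : ℝ) * (if a = b then (1:ℝ) else 0) := by
        apply Finset.sum_congr rfl; intro a _
        apply Finset.sum_congr rfl; intro b _
        rw [Finset.sum_const, nsmul_eq_mul]
    _ = (B.card : ℝ)^2 := by
        simp_rw [← Finset.mul_sum]
        have : ∀ a ∈ B, ∑ b ∈ B, (if a = b then (1:ℝ) else 0) = 1 := by
          intro a ha; rw [Finset.sum_ite_eq, if_pos ha]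
        rw [Finset.sum_congr rfl this, Finset.sum_const, nsmul_eq_mul]
        ring

lemma count2 {N : ℕ} (B : Finset (Fin N)) :
    ∑ a ∈ B, ∑ b ∈ B, ∑ c ∈ B, ∑ d ∈ B, (if a = c ∧ b = d then (1:ℝ) else 0)
      = (B.card : ℝ)^2 := by
  have e1 : ∀ a b c : Fin N, b ∈ B → ∑ d ∈ B, (if a = c ∧ b = d then (1:ℝ) else 0)
      = (if a = c then (1:ℝ) else 0) := by
    intro a b c hb
    by_cases h : a = c
    · simp [h, Finset.sum_ite_eq, hb]
    · simp [h]
  calc ∑ a ∈ B, ∑ b ∈ B, ∑ c ∈ B, ∑ d ∈ B, (if a = c ∧ b = d then (1:ℝ) else 0)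
      = ∑ a ∈ B, ∑ b ∈ B, ∑ c ∈ B, (if a = c then (1:ℝ) else 0) := by
        apply Finset.sum_congr rfl; intro a _
        apply Finset.sum_congr rfl; intro b hb
        apply Finset.sum_congr rfl; intro c _
        exact e1 a b c hb
    _ = ∑ _a ∈ B, ∑ _b ∈ B, (1:ℝ) := by
        apply Finset.sum_congr rfl; intro a ha
        apply Finset.sum_congr rfl; intro b _
        rw [Finset.sum_ite_eq, if_pos ha]
    _ = (B.card : ℝ)^2 := by
        simp [Finset.sum_const]; ring

lemma count3 {N : ℕ} (B : Finset (Fin N)) :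
    ∑ a ∈ B, ∑ b ∈ B, ∑ c ∈ B, ∑ d ∈ B, (if a = d ∧ b = c then (1:ℝ) else 0)
      = (B.card : ℝ)^2 := by
  have e1 : ∀ a b c : Fin N, a ∈ B → ∑ d ∈ B, (if a = d ∧ b = c then (1:ℝ) else 0)
      = (if b = c then (1:ℝ) else 0) := by
    intro a b c ha
    by_cases h : b = c
    · simp [h, Finset.sum_ite_eq, ha]
    · simp [h]
  calc ∑ a ∈ B, ∑ b ∈ B, ∑ c ∈ B, ∑ d ∈ B, (if a = d ∧ b = c then (1:ℝ) else 0)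
      = ∑ a ∈ B, ∑ b ∈ B, ∑ c ∈ B, (if b = c then (1:ℝ) else 0) := by
        apply Finset.sum_congr rfl; intro a ha
        apply Finset.sum_congr rfl; intro b _
        apply Finset.sum_congr rfl; intro c _
        exact e1 a b c ha
    _ = ∑ _a ∈ B, ∑ _b ∈ B, (1:ℝ) := by
        apply Finset.sum_congr rfl; intro a _
        apply Finset.sum_congr rfl; intro b hb
        rw [Finset.sum_ite_eq, if_pos hb]
    _ = (B.card : ℝ)^2 := by
        simp [Finset.sum_const]; ring

lemma sum_S_quad {N : ℕ} (B : Finset (Fin N)) :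
    ∑ ε : Fin N → Bool, (∑ b ∈ B, rr ε b)^4 ≤ 3 * 2^N * (B.card:ℝ)^2 := by
  have expand : ∀ ε : Fin N → Bool, (∑ b ∈ B, rr ε b)^4
      = ∑ a ∈ B, ∑ b ∈ B, ∑ c ∈ B, ∑ d ∈ B, rr ε a * rr ε b * rr ε c * rr ε d := by
    intro ε
    rw [show (4:ℕ) = 2+2 from rfl, pow_add, sq, Finset.sum_mul_sum, Finset.sum_mul_sum]
    simp_rw [Finset.sum_mul, Finset.mul_sum]
    apply Finset.sum_congr rfl; intro a _
    apply Finset.sum_congr rfl; intro b _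
    apply Finset.sum_congr rfl; intro c _
    apply Finset.sum_congr rfl; intro d _
    ring
  calc ∑ ε : Fin N → Bool, (∑ b ∈ B, rr ε b)^4
      = ∑ a ∈ B, ∑ b ∈ B, ∑ c ∈ B, ∑ d ∈ B, ∑ ε : Fin N → Bool,
          rr ε a * rr ε b * rr ε c * rr ε d := by
        simp_rw [expand]
        rw [Finset.sum_comm]
        apply Finset.sum_congr rfl; intro a _
        rw [Finset.sum_comm]
        apply Finset.sum_congr rfl; intro b _
        rw [Finset.sum_comm]
        apply Finset.sum_congr rfl; intro c _
        rw [Finset.sum_comm]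
    _ ≤ ∑ a ∈ B, ∑ b ∈ B, ∑ c ∈ B, ∑ d ∈ B,
          2^N * ((if a = b ∧ c = d then (1:ℝ) else 0) + (if a = c ∧ b = d then 1 else 0)
            + (if a = d ∧ b = c then 1 else 0)) := by
        apply Finset.sum_le_sum; intro a _
        apply Finset.sum_le_sum; intro b _
        apply Finset.sum_le_sum; intro c _
        apply Finset.sum_le_sum; intro d _
        exact term_bound a b c d
    _ = 3 * 2^N * (B.card:ℝ)^2 := by
        simp_rw [← Finset.mul_sum, Finset.sum_add_distrib]
        rw [count1, count2, count3]
        ring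

lemma khintchine {N : ℕ} (B : Finset (Fin N)) :
    2^N * Real.sqrt B.card / Real.sqrt 3 ≤ ∑ ε : Fin N → Bool, |∑ b ∈ B, rr ε b| := by
  set S : (Fin N → Bool) → ℝ := fun ε => ∑ b ∈ B, rr ε b with hS
  set X := ∑ ε : Fin N → Bool, |S ε| with hXdef
  set A := ∑ ε : Fin N → Bool, (S ε)^2 with hAdef
  set C := ∑ ε : Fin N → Bool, |S ε|^3 with hCdef
  set Bq := ∑ ε : Fin N → Bool, (S ε)^4 with hBqdef
  have hX0 : 0 ≤ X := Finset.sum_nonneg fun ε _ => abs_nonneg _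
  have hC0 : 0 ≤ C := Finset.sum_nonneg fun ε _ => by positivity
  have hBq0 : 0 ≤ Bq := Finset.sum_nonneg fun ε _ => by positivity
  have hA : A = 2^N * B.card := sum_S_sq B
  have hBq : Bq ≤ 3 * 2^N * (B.card:ℝ)^2 := sum_S_quad B
  have CS1 : A^2 ≤ X * C := by
    have := Finset.sum_mul_sq_le_sq_mul_sq Finset.univ
      (fun ε => Real.sqrt |S ε|) (fun ε => Real.sqrt |S ε| * |S ε|)
    have e1 : ∀ ε : Fin N → Bool, Real.sqrt |S ε| * (Real.sqrt |S ε| * |S ε|) = (S ε)^2 := by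
      intro ε
      rw [← mul_assoc, Real.mul_self_sqrt (abs_nonneg _), ← sq_abs]
      ring
    have e2 : ∀ ε : Fin N → Bool, (Real.sqrt |S ε|)^2 = |S ε| :=
      fun ε => Real.sq_sqrt (abs_nonneg _)
    have e3 : ∀ ε : Fin N → Bool, (Real.sqrt |S ε| * |S ε|)^2 = |S ε|^3 := by
      intro ε
      rw [mul_pow, Real.sq_sqrt (abs_nonneg _)]
      ring
    simp_rw [e1, e2, e3] at this
    exact this
  have CS2 : C^2 ≤ A * Bq := by
    have := Finset.sum_mul_sq_le_sq_mul_sq Finset.univ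
      (fun ε => |S ε|) (fun ε => (S ε)^2)
    have e1 : ∀ ε : Fin N → Bool, |S ε| * (S ε)^2 = |S ε|^3 := by
      intro ε; rw [← sq_abs]; ring
    have e2 : ∀ ε : Fin N → Bool, |S ε|^2 = (S ε)^2 := fun ε => sq_abs _
    have e3 : ∀ ε : Fin N → Bool, ((S ε)^2)^2 = (S ε)^4 := by intro ε; ring
    simp_rw [e1, e2, e3] at this
    exact this
  rcases Nat.eq_zero_or_pos B.card with hn | hn
  · rw [hn]
    simp only [Nat.cast_zero, Real.sqrt_zero, mul_zero, zero_div]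
    exact hX0
  · set P : ℝ := 2^N with hP
    set n : ℝ := (B.card : ℝ) with hn'
    have hPpos : 0 < P := by positivity
    have hnpos : 0 < n := by rw [hn']; exact_mod_cast hn
    have hApos : 0 < A := by rw [hA]; positivity
    have step1 : A^4 ≤ X^2 * C^2 := by
      have := pow_le_pow_left₀ (sq_nonneg A) CS1 2
      calc A^4 = (A^2)^2 := by ring
        _ ≤ (X*C)^2 := this
        _ = X^2*C^2 := by ring
    have step2 : A^4 ≤ X^2 * (A * Bq) := le_trans step1 (by
      exact mul_le_mul_of_nonneg_left CS2 (sq_nonneg X))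
    have step3 : A^3 ≤ X^2 * Bq := by nlinarith [hApos]
    have step4 : A^3 ≤ X^2 * (3 * P * n^2) := le_trans step3 (by
      exact mul_le_mul_of_nonneg_left hBq (sq_nonneg X))
    have step5 : P^2 * n ≤ 3 * X^2 := by
      have hA3 : A^3 = P^3 * n^3 := by rw [hA]; ring
      rw [hA3] at step4
      nlinarith [mul_pos hPpos (mul_pos hnpos hnpos), sq_nonneg X]
    have key : P * Real.sqrt n / Real.sqrt 3 ≤ X := by
      have e : P * Real.sqrt n / Real.sqrt 3 = Real.sqrt (P^2 * n / 3) := by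
        rw [Real.sqrt_div (by positivity), Real.sqrt_mul (by positivity),
          Real.sqrt_sq hPpos.le]
      rw [e]
      calc Real.sqrt (P^2*n/3) ≤ Real.sqrt (X^2) := by
            apply Real.sqrt_le_sqrt
            linarith
        _ = X := Real.sqrt_sq hX0
    exact key

/-! ### Structural lemmas for the loss decomposition -/

/-- The adversarial loss value for the ρ-discounted infinite memory lower bound.  For `t ≤ m`
the loss is `0`.  For `t > m` lying in block `n` (0-indexed block `b = (t-1)/m`), the loss
applied to a decision sequence `xs` is
`ε_n ⬝ L ⬝ m^{−1/2} ⬝ ∑_{k=0}^{m−1} ρ^{k + t − (n−1)m − 1} xs_{(n−1)m+1−k}`. -/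
noncomputable def fVal10 (ρ L : ℝ) (m N : ℕ) (ε : Fin N → Bool) (xs : ℕ → ℝ) (t : ℕ) : ℝ :=
  if t ≤ m then 0
  else
    (if h : (t - 1) / m < N then (if ε ⟨(t - 1) / m, h⟩ then (1:ℝ) else -1) else 0)
      * L * (Real.sqrt m)⁻¹
      * ∑ k ∈ Finset.range m,
          ρ ^ (k + t - (t - 1) / m * m - 1) * xs ((t - 1) / m * m + 1 - k)

lemma sum_Icc_mul (f : ℕ → ℝ) (N m : ℕ) :
    ∑ t ∈ Finset.Icc 1 (N*m), f t
      = ∑ b ∈ Finset.range N, ∑ j ∈ Finset.range m, f (b*m+j+1) := by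
  induction N with
  | zero => simp
  | succ N ih =>
    rw [Finset.sum_range_succ, ← ih]
    have h1 : Finset.Icc 1 (N*m) = Finset.Ico 1 (N*m+1) := by
      rw [Finset.Ico_add_one_right_eq_Icc]
    have h2 : Finset.Icc 1 ((N+1)*m) = Finset.Ico 1 ((N+1)*m+1) := by
      rw [Finset.Ico_add_one_right_eq_Icc]
    rw [h1, h2]
    have hsm : (N+1)*m = N*m + m := by rw [Nat.add_mul, one_mul]
    have hle1 : 1 ≤ N*m+1 := by omega
    have hle2 : N*m+1 ≤ (N+1)*m+1 := by omega
    rw [← Finset.sum_Ico_consecutive f hle1 hle2]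
    congr 1
    rw [Finset.sum_Ico_eq_sum_range]
    have hlen : (N+1)*m+1 - (N*m+1) = m := by omega
    rw [hlen]
    apply Finset.sum_congr rfl
    intro j _
    congr 1
    omega

lemma fVal10_eval_zero (ρ L : ℝ) (m N : ℕ) (ε : Fin N → Bool) (xs : ℕ → ℝ) (j : ℕ)
    (hj : j < m) : fVal10 ρ L m N ε xs (0*m+j+1) = 0 := by
  unfold fVal10
  rw [if_pos (by omega)]

lemma fVal10_eval_pos (ρ L : ℝ) (m N : ℕ) (ε : Fin N → Bool) (xs : ℕ → ℝ) (b j : ℕ)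
    (hm : 0 < m) (hj : j < m) (hbN : b < N) (hb0 : 0 < b) :
    fVal10 ρ L m N ε xs (b*m+j+1)
      = rr ε ⟨b, hbN⟩ * (L * (Real.sqrt m)⁻¹
          * ∑ k ∈ Finset.range m, ρ^(k+j) * xs (b*m+1-k)) := by
  have hbm : m ≤ b*m := Nat.le_mul_of_pos_left m hb0
  have hdiv : (b*m+j+1-1)/m = b := by
    rw [Nat.add_sub_cancel, Nat.add_comm (b*m) j, Nat.add_mul_div_right _ _ hm,
      Nat.div_eq_of_lt hj, Nat.zero_add]
  unfold fVal10
  rw [if_neg (by omega)]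
  simp only [hdiv]
  rw [dif_pos hbN]
  have hexp : ∀ k, k + (b*m+j+1) - b*m - 1 = k + j := by
    intro k
    rw [show k + (b*m+j+1) = (k+j+1) + b*m from by ring, Nat.add_sub_cancel, Nat.add_sub_cancel]
  have hsum : ∑ k ∈ Finset.range m, ρ ^ (k + (b*m+j+1) - b*m - 1) * xs (b*m+1-k)
      = ∑ k ∈ Finset.range m, ρ^(k+j) * xs (b*m+1-k) := by
    apply Finset.sum_congr rfl
    intro k _
    rw [hexp k]
  rw [hsum]
  unfold rr
  ring

set_option maxHeartbeats 2000000 in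
/-- lower bound for OCO with ρ-discounted infinite memory, 2-norm. There is an
absolute constant `c > 0` such that for every `ρ ∈ [1/2, 1)` with `m = 1/(1−ρ)` a positive
integer, every `L > 0`, every number of blocks `N ≥ 2`, horizon `T = N·m`, and every adaptive
algorithm (decisions `x ε t ∈ [−1,1]` depending only on the signs of the blocks before the block
of round `t`), the expected policy regret against the losses `fVal10` is at least
`c L √T (1−ρ)^{−1}`. -/
theorem stmt_10 : ∃ c > (0:ℝ),
    ∀ (ρ L : ℝ) (m N T : ℕ), (1:ℝ)/2 ≤ ρ → ρ < 1 → (m : ℝ) = (1 - ρ)⁻¹ → 0 < L →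
      2 ≤ N → T = N * m →
    ∀ x : (Fin N → Bool) → ℕ → ℝ,
      (∀ ε t, x ε t ∈ Set.Icc (-1:ℝ) 1) →
      (∀ (t : ℕ) (ε ε' : Fin N → Bool), 1 ≤ t → t ≤ T →
        (∀ k : Fin N, (k : ℕ) < (t + m - 2) / m → ε k = ε' k) → x ε t = x ε' t) →
      ((2 ^ N : ℝ))⁻¹ *
        (∑ ε : Fin N → Bool,
          ((∑ t ∈ Finset.Icc 1 T, fVal10 ρ L m N ε (x ε) t)
            - sInf ((fun y : ℝ => ∑ t ∈ Finset.Icc 1 T, fVal10 ρ L m N ε (fun _ => y) t) ''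
                Set.Icc (-1:ℝ) 1)))
      ≥ c * L * Real.sqrt (T : ℝ) * (1 - ρ)⁻¹ := by
  refine ⟨1/10, by norm_num, ?_⟩
  intro ρ L m N T hρhalf hρ1 hm hL hN hT x hx hadapt
  subst hT
  -- basic numeric facts
  have hρ0 : (0:ℝ) ≤ ρ := by linarith
  have h1ρ : (0:ℝ) < 1 - ρ := by linarith
  have hmR : (2:ℝ) ≤ (m:ℝ) := by
    rw [hm]
    have h12 : (1:ℝ) - ρ ≤ 1/2 := by linarith
    calc (2:ℝ) = ((1:ℝ)/2)⁻¹ := by norm_num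
      _ ≤ (1-ρ)⁻¹ := by
        apply inv_anti₀ h1ρ h12
  have hm2 : 2 ≤ m := by exact_mod_cast hmR
  have hm0 : 0 < m := by omega
  have hmpos : (0:ℝ) < m := by linarith
  have hminv : ((m:ℝ)) * (1-ρ) = 1 := by rw [hm]; field_simp
  -- geometric sum lower bound
  set G := ∑ k ∈ Finset.range m, ρ^k with hGdef
  have hρm : ρ^m ≤ 1/2 := by
    have h1 : ρ ≤ Real.exp (ρ-1) := by linarith [Real.add_one_le_exp (ρ-1)]
    have h2 : ρ^m ≤ Real.exp (ρ-1)^m := pow_le_pow_left₀ hρ0 h1 m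
    have h3 : Real.exp (ρ-1)^m = Real.exp ((m:ℝ)*(ρ-1)) := by
      rw [← Real.exp_nat_mul]
    have h4 : (m:ℝ)*(ρ-1) = -1 := by
      have e : (m:ℝ)*(ρ-1) = -((m:ℝ)*(1-ρ)) := by ring
      rw [e, hminv]
    have h5 : Real.exp (-1) ≤ 1/2 := by
      rw [Real.exp_neg]
      have he : (2:ℝ) ≤ Real.exp 1 := by linarith [Real.add_one_le_exp (1:ℝ)]
      have : (Real.exp 1)⁻¹ ≤ (2:ℝ)⁻¹ := by
        apply inv_anti₀ (by norm_num) he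
      simpa using this
    calc ρ^m ≤ Real.exp ((m:ℝ)*(ρ-1)) := by rw [← h3]; exact h2
      _ = Real.exp (-1) := by rw [h4]
      _ ≤ 1/2 := h5
  have hgeom : (m:ℝ)/2 ≤ G := by
    have hne : ρ ≠ 1 := ne_of_lt hρ1
    have hGval : G = (1 - ρ^m)/(1-ρ) := by
      rw [hGdef, geom_sum_eq hne]
      rw [show (1:ℝ)-ρ^m = -(ρ^m-1) from by ring, show (1:ℝ)-ρ = -(ρ-1) from by ring,
        neg_div_neg_eq]
    rw [hGval, div_le_div_iff₀ (by norm_num) h1ρ]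
    nlinarith [hρm, hminv]
  have hGpos : (0:ℝ) < G := by linarith
  -- the block index set
  have hNpos : 0 < N := by omega
  set B : Finset (Fin N) := Finset.univ.filter (fun b => (b:ℕ) ≠ 0) with hBdef
  have hcard : B.card = N - 1 := by
    have hBe : B = Finset.univ.erase ⟨0, hNpos⟩ := by
      ext b
      simp only [hBdef, Finset.mem_filter, Finset.mem_univ, true_and, Finset.mem_erase,
        and_true]
      simp [ne_eq, Fin.ext_iff]
    rw [hBe, Finset.card_erase_of_mem (Finset.mem_univ _), Finset.card_univ, Fintype.card_fin]
  -- decomposition of the loss sum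
  have key1 : ∀ (ε : Fin N → Bool) (xs : ℕ → ℝ),
      ∑ t ∈ Finset.Icc 1 (N*m), fVal10 ρ L m N ε xs t
        = ∑ b : Fin N, ∑ j ∈ Finset.range m, fVal10 ρ L m N ε xs ((b:ℕ)*m+j+1) := by
    intro ε xs
    rw [sum_Icc_mul, ← Fin.sum_univ_eq_sum_range
      (fun b => ∑ j ∈ Finset.range m, fVal10 ρ L m N ε xs (b*m+j+1)) N]
  have keyeval : ∀ (ε : Fin N → Bool) (xs : ℕ → ℝ) (b : Fin N), ∀ j ∈ Finset.range m,
      fVal10 ρ L m N ε xs ((b:ℕ)*m+j+1)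
        = if (b:ℕ) = 0 then 0 else rr ε b * (L * (Real.sqrt m)⁻¹
            * ∑ k ∈ Finset.range m, ρ^(k+j) * xs ((b:ℕ)*m+1-k)) := by
    intro ε xs b j hj
    rw [Finset.mem_range] at hj
    by_cases hb : (b:ℕ) = 0
    · rw [if_pos hb, hb]
      exact fVal10_eval_zero ρ L m N ε xs j hj
    · rw [if_neg hb]
      have := fVal10_eval_pos ρ L m N ε xs (b:ℕ) j hm0 hj b.2 (Nat.pos_of_ne_zero hb)
      simpa using this
  -- expected algorithm cost is zero
  have EA : ∑ ε : Fin N → Bool, ∑ t ∈ Finset.Icc 1 (N*m), fVal10 ρ L m N ε (x ε) t = 0 := by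
    have hrw : ∀ ε : Fin N → Bool, ∑ t ∈ Finset.Icc 1 (N*m), fVal10 ρ L m N ε (x ε) t
        = ∑ b : Fin N, ∑ j ∈ Finset.range m, (if (b:ℕ) = 0 then 0
            else rr ε b * (L * (Real.sqrt m)⁻¹
              * ∑ k ∈ Finset.range m, ρ^(k+j) * x ε ((b:ℕ)*m+1-k))) := by
      intro ε
      rw [key1 ε (x ε)]
      exact Finset.sum_congr rfl fun b _ => Finset.sum_congr rfl fun j hj =>
        keyeval ε (x ε) b j hj
    simp_rw [hrw]
    rw [Finset.sum_comm]
    apply Finset.sum_eq_zero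
    intro b _
    rw [Finset.sum_comm]
    apply Finset.sum_eq_zero
    intro j _
    by_cases hb : (b:ℕ) = 0
    · simp [hb]
    · simp only [if_neg hb]
      apply flip_sum b
      intro ε
      have hb1 : 1 ≤ (b:ℕ) := Nat.pos_of_ne_zero hb
      have hbm : m ≤ (b:ℕ)*m := Nat.le_mul_of_pos_left m hb1
      have hbNm : (b:ℕ)*m + m ≤ N*m := by
        have h1 : ((b:ℕ)+1) * m ≤ N*m := Nat.mul_le_mul_right m b.2
        have e : ((b:ℕ)+1)*m = (b:ℕ)*m+m := by rw [Nat.add_mul, one_mul]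
        omega
      have hxeq : ∀ k ∈ Finset.range m,
          x (Function.update ε b (!(ε b))) ((b:ℕ)*m+1-k) = x ε ((b:ℕ)*m+1-k) := by
        intro k hk
        rw [Finset.mem_range] at hk
        have hs1 : 1 ≤ (b:ℕ)*m+1-k := by omega
        have hs2 : (b:ℕ)*m+1-k ≤ N*m := by omega
        have hdivb : ((b:ℕ)*m+1-k + m - 2)/m ≤ (b:ℕ) := by
          have hlt : ((b:ℕ)*m+1-k + m - 2)/m < (b:ℕ)+1 := by
            rw [Nat.div_lt_iff_lt_mul hm0]
            have e : ((b:ℕ)+1)*m = (b:ℕ)*m+m := by rw [Nat.add_mul, one_mul]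
            omega
          omega
        symm
        apply hadapt _ ε (Function.update ε b (!(ε b))) hs1 hs2
        intro k' hk'
        have hne : k' ≠ b := by
          intro h
          rw [h] at hk'
          omega
        exact (Function.update_of_ne hne _ ε).symm
      have hsum : ∑ k ∈ Finset.range m, ρ^(k+j) * x (Function.update ε b (!(ε b))) ((b:ℕ)*m+1-k)
          = ∑ k ∈ Finset.range m, ρ^(k+j) * x ε ((b:ℕ)*m+1-k) :=
        Finset.sum_congr rfl fun k hk => by rw [hxeq k hk]
      rw [hsum, rr_update_self]
      ring
  -- the comparator sum is linear in y
  set cf := L * (Real.sqrt m)⁻¹ * (G*G) with hcf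
  have hsm0 : (0:ℝ) < Real.sqrt m := Real.sqrt_pos.mpr hmpos
  have hcf0 : 0 ≤ cf := by
    apply mul_nonneg (mul_nonneg hL.le (by positivity)) (by nlinarith)
  set S : (Fin N → Bool) → ℝ := fun ε => ∑ b ∈ B, rr ε b with hSdef
  have key2 : ∀ (ε : Fin N → Bool) (y : ℝ),
      ∑ t ∈ Finset.Icc 1 (N*m), fVal10 ρ L m N ε (fun _ => y) t = cf * S ε * y := by
    intro ε y
    rw [key1]
    calc ∑ b : Fin N, ∑ j ∈ Finset.range m, fVal10 ρ L m N ε (fun _ => y) ((b:ℕ)*m+j+1)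
        = ∑ b : Fin N, (if (b:ℕ) = 0 then 0 else rr ε b)
            * (L * (Real.sqrt m)⁻¹ * ((G*G)*y)) := by
          apply Finset.sum_congr rfl; intro b _
          rw [Finset.sum_congr rfl (keyeval ε _ b)]
          by_cases hb : (b:ℕ) = 0
          · simp [hb]
          · simp only [if_neg hb]
            have hGG : ∑ j ∈ Finset.range m, ∑ k ∈ Finset.range m, ρ^(k+j)*y = (G*G)*y := by
              have hin : ∀ j : ℕ, ∑ k ∈ Finset.range m, ρ^(k+j)*y = G*(ρ^j*y) := by
                intro j
                calc ∑ k ∈ Finset.range m, ρ^(k+j)*y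
                    = ∑ k ∈ Finset.range m, ρ^k*(ρ^j*y) := by
                      apply Finset.sum_congr rfl; intro k _; rw [pow_add]; ring
                  _ = G*(ρ^j*y) := by rw [hGdef, Finset.sum_mul]
              rw [Finset.sum_congr rfl (fun j _ => hin j)]
              calc ∑ j ∈ Finset.range m, G*(ρ^j*y)
                  = G * ∑ j ∈ Finset.range m, ρ^j*y := (Finset.mul_sum _ _ _).symm
                _ = G*(G*y) := by
                    rw [show ∑ j ∈ Finset.range m, ρ^j*y = G*y from by rw [hGdef, Finset.sum_mul]]
                _ = (G*G)*y := by ring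
            rw [← Finset.mul_sum]
            congr 1
            rw [← Finset.mul_sum, hGG]
      _ = cf * S ε * y := by
          rw [← Finset.sum_mul]
          have hSe : S ε = ∑ b : Fin N, (if (b:ℕ) = 0 then 0 else rr ε b) := by
            show ∑ b ∈ B, rr ε b = _
            rw [hBdef, Finset.sum_filter]
            apply Finset.sum_congr rfl
            intro b _
            by_cases hb : (b:ℕ) = 0 <;> simp [hb]
          rw [hSe, hcf]
          ring
  -- the infimum of the comparator is at most -(cf * |S ε|)
  have hinf : ∀ ε : Fin N → Bool,
      sInf ((fun y : ℝ => ∑ t ∈ Finset.Icc 1 (N*m), fVal10 ρ L m N ε (fun _ => y) t) ''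
          Set.Icc (-1:ℝ) 1) ≤ -(cf * |S ε|) := by
    intro ε
    have habsK : |cf * S ε| = cf * |S ε| := by rw [abs_mul, abs_of_nonneg hcf0]
    have hbdd : BddBelow ((fun y : ℝ => ∑ t ∈ Finset.Icc 1 (N*m),
        fVal10 ρ L m N ε (fun _ => y) t) '' Set.Icc (-1:ℝ) 1) := by
      refine ⟨-(cf * |S ε|), ?_⟩
      rintro z ⟨y, hy, rfl⟩
      show -(cf * |S ε|) ≤ ∑ t ∈ Finset.Icc 1 (N*m), fVal10 ρ L m N ε (fun _ => y) t
      rw [key2]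
      have hy1 : |y| ≤ 1 := abs_le.mpr ⟨hy.1, hy.2⟩
      have h1 : |cf * S ε * y| ≤ cf * |S ε| := by
        rw [abs_mul, habsK]
        nlinarith [abs_nonneg (cf * S ε), abs_nonneg y, mul_nonneg hcf0 (abs_nonneg (S ε))]
      linarith [neg_abs_le (cf * S ε * y)]
    have hmem : -(cf * |S ε|) ∈ ((fun y : ℝ => ∑ t ∈ Finset.Icc 1 (N*m),
        fVal10 ρ L m N ε (fun _ => y) t) '' Set.Icc (-1:ℝ) 1) := by
      rcases le_or_gt 0 (cf * S ε) with hK0 | hK0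
      · refine ⟨-1, ⟨le_refl _, by norm_num⟩, ?_⟩
        show ∑ t ∈ Finset.Icc 1 (N*m), fVal10 ρ L m N ε (fun _ => (-1:ℝ)) t = -(cf * |S ε|)
        rw [key2, ← habsK, abs_of_nonneg hK0]
        ring
      · refine ⟨1, ⟨by norm_num, le_refl _⟩, ?_⟩
        show ∑ t ∈ Finset.Icc 1 (N*m), fVal10 ρ L m N ε (fun _ => (1:ℝ)) t = -(cf * |S ε|)
        rw [key2, ← habsK, abs_of_neg hK0]
        ring
    exact csInf_le hbdd hmem
  -- assemble
  have hsum1 : ∑ ε : Fin N → Bool,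
      ((∑ t ∈ Finset.Icc 1 (N*m), fVal10 ρ L m N ε (x ε) t)
        - sInf ((fun y : ℝ => ∑ t ∈ Finset.Icc 1 (N*m), fVal10 ρ L m N ε (fun _ => y) t) ''
            Set.Icc (-1:ℝ) 1))
      ≥ cf * ∑ ε : Fin N → Bool, |S ε| := by
    have step : ∀ ε : Fin N → Bool,
        (∑ t ∈ Finset.Icc 1 (N*m), fVal10 ρ L m N ε (x ε) t) + cf * |S ε|
          ≤ (∑ t ∈ Finset.Icc 1 (N*m), fVal10 ρ L m N ε (x ε) t)
            - sInf ((fun y : ℝ => ∑ t ∈ Finset.Icc 1 (N*m),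
                fVal10 ρ L m N ε (fun _ => y) t) '' Set.Icc (-1:ℝ) 1) := by
      intro ε
      have := hinf ε
      linarith
    calc cf * ∑ ε : Fin N → Bool, |S ε|
        = ∑ ε : Fin N → Bool,
            ((∑ t ∈ Finset.Icc 1 (N*m), fVal10 ρ L m N ε (x ε) t) + cf * |S ε|) := by
          rw [Finset.sum_add_distrib, EA, zero_add, Finset.mul_sum]
      _ ≤ _ := Finset.sum_le_sum fun ε _ => step ε
  have hkh : (2:ℝ)^N * Real.sqrt ((N:ℝ)-1) / Real.sqrt 3 ≤ ∑ ε : Fin N → Bool, |S ε| := by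
    have := khintchine B
    rw [hcard] at this
    have e : ((N-1 : ℕ) : ℝ) = (N:ℝ)-1 := by
      rw [Nat.cast_sub (by omega)]
      norm_num
    rw [e] at this
    exact this
  -- final numeric bound
  have h2N : (0:ℝ) < 2^N := by positivity
  have hNR : (2:ℝ) ≤ (N:ℝ) := by exact_mod_cast hN
  have hsq : 4 * Real.sqrt 3 * Real.sqrt (N:ℝ) ≤ 10 * Real.sqrt ((N:ℝ)-1) := by
    have h48 : 48*(N:ℝ) ≤ 100*((N:ℝ)-1) := by linarith
    have hmono := Real.sqrt_le_sqrt h48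
    rw [Real.sqrt_mul (by norm_num) (N:ℝ), Real.sqrt_mul (by norm_num) ((N:ℝ)-1)] at hmono
    have s48 : Real.sqrt 48 = 4*Real.sqrt 3 := by
      rw [show (48:ℝ) = 4^2*3 from by norm_num, Real.sqrt_mul (by positivity),
        Real.sqrt_sq (by norm_num)]
    have s100 : Real.sqrt 100 = 10 := by
      rw [show (100:ℝ) = 10^2 from by norm_num, Real.sqrt_sq (by norm_num)]
    rw [s48, s100] at hmono
    linarith
  have s3pos : (0:ℝ) < Real.sqrt 3 := Real.sqrt_pos.mpr (by norm_num)
  have hsqm : Real.sqrt m * Real.sqrt m = (m:ℝ) := Real.mul_self_sqrt hmpos.le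
  have hGG4 : (m:ℝ)*(m:ℝ)/4 ≤ G*G := by nlinarith
  have hfinal : 1/10 * L * Real.sqrt ((N*m : ℕ) : ℝ) * (1-ρ)⁻¹
      ≤ cf * (Real.sqrt ((N:ℝ)-1) / Real.sqrt 3) := by
    rw [← hm]
    have ecast : ((N*m : ℕ) : ℝ) = (N:ℝ)*(m:ℝ) := by push_cast; ring
    rw [ecast, Real.sqrt_mul (Nat.cast_nonneg N), hcf]
    have hsmne : Real.sqrt m ≠ 0 := ne_of_gt hsm0
    have hinv : (Real.sqrt m)⁻¹ * ((m:ℝ)*(m:ℝ)) = (m:ℝ)*Real.sqrt m := by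
      rw [inv_mul_eq_div, div_eq_iff hsmne, mul_assoc, hsqm]
    have hstep : L * (Real.sqrt m)⁻¹ * ((m:ℝ)*(m:ℝ)/4) * (Real.sqrt ((N:ℝ)-1) / Real.sqrt 3)
        ≤ L * (Real.sqrt m)⁻¹ * (G*G) * (Real.sqrt ((N:ℝ)-1) / Real.sqrt 3) := by
      apply mul_le_mul_of_nonneg_right _ (by positivity)
      apply mul_le_mul_of_nonneg_left hGG4 (by positivity)
    have hEq : L * (Real.sqrt m)⁻¹ * ((m:ℝ)*(m:ℝ)/4) * (Real.sqrt ((N:ℝ)-1) / Real.sqrt 3)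
        = (L/4 * ((m:ℝ)*Real.sqrt m) * Real.sqrt ((N:ℝ)-1)) / Real.sqrt 3 := by
      rw [← hinv]; ring
    have htarget : 1/10 * L * (Real.sqrt (N:ℝ) * Real.sqrt m) * (m:ℝ)
        ≤ (L/4 * ((m:ℝ)*Real.sqrt m) * Real.sqrt ((N:ℝ)-1)) / Real.sqrt 3 := by
      rw [le_div_iff₀ s3pos]
      have hc : (0:ℝ) ≤ L * (m:ℝ) * Real.sqrt m / 40 := by positivity
      have hmul := mul_le_mul_of_nonneg_left hsq hc
      nlinarith [hmul]
    calc 1/10 * L * (Real.sqrt (N:ℝ) * Real.sqrt m) * (m:ℝ)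
        ≤ (L/4 * ((m:ℝ)*Real.sqrt m) * Real.sqrt ((N:ℝ)-1)) / Real.sqrt 3 := htarget
      _ = L * (Real.sqrt m)⁻¹ * ((m:ℝ)*(m:ℝ)/4) * (Real.sqrt ((N:ℝ)-1) / Real.sqrt 3) := hEq.symm
      _ ≤ _ := hstep
  calc (1:ℝ)/10 * L * Real.sqrt ((N*m : ℕ) : ℝ) * (1-ρ)⁻¹
      ≤ cf * (Real.sqrt ((N:ℝ)-1) / Real.sqrt 3) := hfinal
    _ = (2^N : ℝ)⁻¹ * (cf * (2^N * Real.sqrt ((N:ℝ)-1) / Real.sqrt 3)) := by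
        field_simp
    _ ≤ (2^N : ℝ)⁻¹ * (cf * ∑ ε : Fin N → Bool, |S ε|) := by
        apply mul_le_mul_of_nonneg_left _ (inv_nonneg.mpr h2N.le)
        apply mul_le_mul_of_nonneg_left _ hcf0
        exact hkh
    _ ≤ (2^N : ℝ)⁻¹ * (∑ ε : Fin N → Bool,
          ((∑ t ∈ Finset.Icc 1 (N*m), fVal10 ρ L m N ε (x ε) t)
            - sInf ((fun y : ℝ => ∑ t ∈ Finset.Icc 1 (N*m),
                fVal10 ρ L m N ε (fun _ => y) t) '' Set.Icc (-1:ℝ) 1))) := by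
        apply mul_le_mul_of_nonneg_left _ (inv_nonneg.mpr h2N.le)
        exact hsum1
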